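/- Let n ≥ 1, m ≥ 1 be integers and q ∈ ℂ with q ≠ 0 and q^j ≠ 1 for all 1 ≤ j ≤ n-1. With T_q the n×n lower-triangular Toeplitz matrix with entries 1/(q;q)_{i-j} for i ≥ j, D_r the diagonal matrix with diagonal entries r^i, and S the lower shift matrix, we have T_q D_{q^{-m}} T_{q^{-1}} D_{q^m} = I + Σ_{j=1}^{m-1} ((q^{1-m};q)_j / (q;q)_j) S^j. -/

import Mathlib

noncomputable def qPoch (z q : ℂ) (n : ℕ) : ℂ := ∏ i ∈ Finset.range n, (1 - z * q ^ i)

lemma qPoch_succ (z q : ℂ) (d : ℕ) : qPoch z q (d+1) = qPoch z q d * (1 - z * q ^ d) :=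
  Finset.prod_range_succ _ _

lemma qPoch_succ' (z q : ℂ) (d : ℕ) : qPoch z q (d+1) = (1 - z) * qPoch (z*q) q d := by
  unfold qPoch
  rw [Finset.prod_range_succ']
  simp only [pow_zero, mul_one, pow_succ]
  rw [mul_comm]
  congr 1
  apply Finset.prod_congr rfl
  intros; ring_nf


lemma tri_succ (l : ℕ) : (l+1)*(l+2)/2 = l*(l+1)/2 + (l+1) := by
  have h : (l+1)*(l+2) = l*(l+1) + (l+1)*2 := by ring
  rw [h, Nat.add_mul_div_right _ _ (by norm_num)]

lemma tri_succ' (l : ℕ) : (l+1)*l/2 = l*(l-1)/2 + l := by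
  cases l with
  | zero => simp
  | succ t =>
    have h := tri_succ t
    rw [mul_comm (t+1) (t+2), mul_comm t (t+1)] at h
    simpa using h

lemma qPoch_qq_ne_zero (q : ℂ) (d : ℕ) (h : ∀ j, 1 ≤ j → j ≤ d → q ^ j ≠ 1) :
    qPoch q q d ≠ 0 := by
  unfold qPoch
  rw [Finset.prod_ne_zero_iff]
  intro i hi hzero
  simp only [Finset.mem_range] at hi
  apply h (i+1) (by omega) (by omega)
  have : q * q ^ i = 1 := by linear_combination -hzero
  rw [pow_succ, mul_comm]; exact this

lemma qPoch_inv (q : ℂ) (hq0 : q ≠ 0) (l : ℕ) :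
    qPoch q⁻¹ q⁻¹ l = (-1)^l * (q ^ (l*(l+1)/2))⁻¹ * qPoch q q l := by
  induction l with
  | zero => simp [qPoch]
  | succ l ih =>
    rw [qPoch_succ, qPoch_succ, ih, tri_succ l,
      pow_add]
    have hql : q ^ l ≠ 0 := pow_ne_zero _ hq0
    have hE : q ^ (l*(l+1)/2) ≠ 0 := pow_ne_zero _ hq0
    field_simp
    have hqq : q ^ l * q⁻¹ ^ l = 1 := by rw [← mul_pow, mul_inv_cancel₀ hq0, one_pow]
    linear_combination (-(qPoch q q l * q * q ^ (l * (l + 1) / 2))) * hqq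

lemma qPoch_inv' (q : ℂ) (hq0 : q ≠ 0) (l : ℕ) :
    (qPoch q⁻¹ q⁻¹ l)⁻¹ = (-1)^l * q ^ (l*(l+1)/2) * (qPoch q q l)⁻¹ := by
  rw [qPoch_inv q hq0 l, mul_inv, mul_inv, inv_inv]
  rw [← inv_pow, inv_neg, inv_one]

lemma key_sum (q : ℂ) : ∀ (d : ℕ), (∀ j, 1 ≤ j → j ≤ d → q ^ j ≠ 1) → ∀ z : ℂ,
    ∑ l ∈ Finset.range (d+1),
      ((-1)^l * q ^ (l*(l-1)/2) * z ^ l) / (qPoch q q l * qPoch q q (d-l))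
    = qPoch z q d / qPoch q q d := by
  intro d
  induction d with
  | zero => intro _ z; simp [qPoch]
  | succ d ih =>
    intro hq z
    have hq' : ∀ j, 1 ≤ j → j ≤ d → q ^ j ≠ 1 := fun j h1 h2 => hq j h1 (h2.trans (Nat.le_succ d))
    have hP : ∀ a, a ≤ d + 1 → qPoch q q a ≠ 0 := fun a ha =>
      qPoch_qq_ne_zero q a (fun j h1 h2 => hq j h1 (h2.trans ha))
    have hd1 : (1 : ℂ) - q ^ (d+1) ≠ 0 := sub_ne_zero_of_ne (Ne.symm (hq (d+1) (by omega) le_rfl))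
    set t : ℕ → ℂ := fun l =>
      ((-1)^l * q ^ (l*(l-1)/2) * z ^ l) / (qPoch q q l * qPoch q q (d+1-l)) with ht
    set u : ℕ → ℂ := fun l =>
      ((-1)^l * q ^ (l*(l-1)/2) * (z*q) ^ l) / (qPoch q q l * qPoch q q (d-l)) with hu
    have main : (∑ l ∈ Finset.range (d+2), t l) * (1 - q ^ (d+1))
        = (1 - z) * ∑ l ∈ Finset.range (d+1), u l := by
      rw [Finset.sum_mul]
      have split : ∀ l ∈ Finset.range (d+2),
          t l * (1 - q ^ (d+1)) = t l * q ^ l * (1 - q ^ (d+1-l)) + t l * (1 - q ^ l) := by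
        intro l hl
        simp only [Finset.mem_range] at hl
        have hpow : q ^ l * q ^ (d+1-l) = q ^ (d+1) := by rw [← pow_add]; congr 1; omega
        linear_combination t l * hpow
      rw [Finset.sum_congr rfl split, Finset.sum_add_distrib]
      have hA : ∑ l ∈ Finset.range (d+2), t l * q ^ l * (1 - q ^ (d+1-l))
          = ∑ l ∈ Finset.range (d+1), u l := by
        rw [Finset.sum_range_succ]
        have hz : t (d+1) * q ^ (d+1) * (1 - q ^ (d+1-(d+1))) = 0 := by
          rw [ht]; simp
        rw [hz, add_zero]
        apply Finset.sum_congr rfl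
        intro l hl
        simp only [Finset.mem_range] at hl
        have h1 : d + 1 - l = (d - l) + 1 := by omega
        have h2 : qPoch q q (d+1-l) = qPoch q q (d-l) * (1 - q ^ (d+1-l)) := by
          rw [h1, qPoch_succ, ← pow_succ']
        have hc : (1 : ℂ) - q ^ (d+1-l) ≠ 0 :=
          sub_ne_zero_of_ne (Ne.symm (hq (d+1-l) (by omega) (by omega)))
        have hl' : qPoch q q l ≠ 0 := hP l (by omega)
        have hdl : qPoch q q (d-l) ≠ 0 := hP (d-l) (by omega)
        rw [ht, hu]
        simp only []
        rw [h2, mul_pow]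
        field_simp
      have hB : ∑ l ∈ Finset.range (d+2), t l * (1 - q ^ l)
          = -z * ∑ l ∈ Finset.range (d+1), u l := by
        rw [Finset.sum_range_succ', Finset.mul_sum]
        have h0 : t 0 * (1 - q ^ 0) = 0 := by simp
        rw [h0, add_zero]
        apply Finset.sum_congr rfl
        intro l hl
        simp only [Finset.mem_range] at hl
        have h2 : qPoch q q (l+1) = qPoch q q l * (1 - q ^ (l+1)) := by
          rw [qPoch_succ, ← pow_succ']
        have hc : (1 : ℂ) - q ^ (l+1) ≠ 0 :=
          sub_ne_zero_of_ne (Ne.symm (hq (l+1) (by omega) (by omega)))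
        have hl' : qPoch q q l ≠ 0 := hP l (by omega)
        have hdl : qPoch q q (d-l) ≠ 0 := hP (d-l) (by omega)
        rw [ht, hu]
        simp only []
        rw [h2, show (l+1) - 1 = l from rfl, tri_succ' l, pow_add, mul_pow,
          show d + 1 - (l+1) = d - l from by omega]
        field_simp
        ring
      rw [hA, hB]
      ring
    rw [ih hq' (z*q)] at main
    have hPd : qPoch q q d ≠ 0 := hP d (by omega)
    have hPd1 : qPoch q q (d+1) ≠ 0 := hP (d+1) le_rfl
    rw [qPoch_succ' z q d, qPoch_succ q q d, ← pow_succ']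
    rw [eq_div_iff (mul_ne_zero hPd hd1)]
    calc (∑ l ∈ Finset.range (d+2), t l) * (qPoch q q d * (1 - q ^ (d+1)))
        = ((∑ l ∈ Finset.range (d+2), t l) * (1 - q ^ (d+1))) * qPoch q q d := by ring
      _ = ((1 - z) * (qPoch (z*q) q d / qPoch q q d)) * qPoch q q d := by rw [main]
      _ = (1 - z) * qPoch (z*q) q d := by field_simp

lemma Spow_apply {n : ℕ} (S : Matrix (Fin n) (Fin n) ℂ)
    (hS : ∀ i j : Fin n, S i j = if (i : ℕ) = (j : ℕ) + 1 then 1 else 0) :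
    ∀ (p : ℕ) (i k : Fin n), (S ^ p) i k = if (i : ℕ) = (k : ℕ) + p then 1 else 0 := by
  intro p
  induction p with
  | zero =>
    intro i k
    simp [Matrix.one_apply, Fin.ext_iff]
  | succ p ih =>
    intro i k
    rw [pow_succ', Matrix.mul_apply]
    by_cases h : (i : ℕ) = (k : ℕ) + (p + 1)
    · have hkp : (k : ℕ) + p < n := by omega
      rw [Finset.sum_eq_single_of_mem ⟨(k:ℕ)+p, hkp⟩ (Finset.mem_univ _)]
      · rw [hS, ih]
        simp [h]
        omega
      · intro j _ hj
        rw [ih]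
        have : (j : ℕ) ≠ (k : ℕ) + p := fun hc => hj (Fin.ext hc)
        simp [this]
    · rw [if_neg h]
      apply Finset.sum_eq_zero
      intro j _
      rw [hS, ih]
      by_cases h1 : (j : ℕ) = (k : ℕ) + p
      · have : (i : ℕ) ≠ (j : ℕ) + 1 := by omega
        simp [this]
      · simp [h1]

lemma zpow_scalar (q : ℂ) (hq0 : q ≠ 0) (m k l : ℕ) :
    (q ^ (-(m:ℤ))) ^ (k + l) * ((q ^ (m:ℤ)) ^ k * q ^ (l*(l+1)/2)) =
    q ^ (l*(l-1)/2) * (q ^ ((1:ℤ) - m)) ^ l := by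
  have hnat : l*(l+1)/2 = l*(l-1)/2 + l := by rw [mul_comm l (l+1)]; exact tri_succ' l
  rw [hnat, pow_add q]
  generalize l*(l-1)/2 = a
  rw [← zpow_natCast q a, ← zpow_natCast q l,
      ← zpow_natCast (q ^ (-(m:ℤ))) (k+l), ← zpow_natCast (q ^ ((m:ℤ))) k,
      ← zpow_natCast (q ^ ((1:ℤ)-(m:ℤ))) l, ← zpow_mul, ← zpow_mul, ← zpow_mul,
      ← zpow_add₀ hq0, ← zpow_add₀ hq0, ← zpow_add₀ hq0, ← zpow_add₀ hq0]
  congr 1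
  push_cast
  ring

theorem stmt9 (n m : ℕ) (hn : 1 ≤ n) (hm : 1 ≤ m) (q : ℂ) (hq0 : q ≠ 0)
    (hq : ∀ j : ℕ, 1 ≤ j → j ≤ n - 1 → q ^ j ≠ 1)
    (T T' S : Matrix (Fin n) (Fin n) ℂ)
    (hT : ∀ i j : Fin n, T i j =
      if (j : ℕ) ≤ (i : ℕ) then 1 / qPoch q q ((i : ℕ) - (j : ℕ)) else 0)
    (hT' : ∀ i j : Fin n, T' i j =
      if (j : ℕ) ≤ (i : ℕ) then 1 / qPoch q⁻¹ q⁻¹ ((i : ℕ) - (j : ℕ)) else 0)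
    (hS : ∀ i j : Fin n, S i j = if (i : ℕ) = (j : ℕ) + 1 then 1 else 0) :
    T * (Matrix.diagonal fun i : Fin n => (q ^ (-(m : ℤ))) ^ (i : ℕ)) * T' *
      (Matrix.diagonal fun i : Fin n => (q ^ (m : ℤ)) ^ (i : ℕ)) =
      1 + ∑ j ∈ Finset.Icc 1 (m - 1),
        (qPoch (q ^ ((1 : ℤ) - m)) q j / qPoch q q j) • S ^ j := by
  have hSpow := Spow_apply S hS
  set z : ℂ := q ^ ((1:ℤ) - (m:ℤ)) with hz
  ext i k
  rw [Matrix.mul_diagonal, Matrix.mul_apply, Finset.sum_mul]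
  simp only [Matrix.mul_diagonal, Matrix.add_apply, Matrix.one_apply, Matrix.sum_apply,
    Matrix.smul_apply, smul_eq_mul, hSpow, hT, hT']
  by_cases hik : (k : ℕ) ≤ (i : ℕ)
  · -- main case
    set d : ℕ := (i : ℕ) - (k : ℕ) with hd
    have hin : (i : ℕ) ≤ n - 1 := by omega
    have hdn : d ≤ n - 1 := by omega
    set G : ℕ → ℂ := fun j =>
      (if j ≤ (i:ℕ) then 1 / qPoch q q ((i:ℕ) - j) else 0) * (q ^ (-(m:ℤ))) ^ j *
      (if (k:ℕ) ≤ j then 1 / qPoch q⁻¹ q⁻¹ (j - (k:ℕ)) else 0) * (q ^ ((m:ℤ))) ^ (k:ℕ)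
      with hG
    have hLHS : (∑ j : Fin n,
        (if (j:ℕ) ≤ (i:ℕ) then 1 / qPoch q q ((i:ℕ) - (j:ℕ)) else 0) *
          (q ^ (-(m:ℤ))) ^ (j:ℕ) *
          (if (k:ℕ) ≤ (j:ℕ) then 1 / qPoch q⁻¹ q⁻¹ ((j:ℕ) - (k:ℕ)) else 0) *
          (q ^ ((m:ℤ))) ^ (k:ℕ))
        = qPoch z q d / qPoch q q d := by
      show (∑ j : Fin n, G (j:ℕ)) = qPoch z q d / qPoch q q d
      rw [Fin.sum_univ_eq_sum_range G n]
      have hilt : (i:ℕ) < n := i.isLt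
      have hsub : Finset.Ico (k:ℕ) ((i:ℕ)+1) ⊆ Finset.range n := by
        intro x hx
        simp only [Finset.mem_Ico] at hx
        simp only [Finset.mem_range]
        omega
      have hzero : ∀ x ∈ Finset.range n, x ∉ Finset.Ico (k:ℕ) ((i:ℕ)+1) → G x = 0 := by
        intro x _ hx
        simp only [Finset.mem_Ico, not_and_or, not_le, not_lt] at hx
        rcases hx with h | h
        · simp only [hG, if_neg (show ¬ (k:ℕ) ≤ x by omega)]
          ring
        · simp only [hG, if_neg (show ¬ x ≤ (i:ℕ) by omega)]
          ring
      rw [← Finset.sum_subset hsub hzero, Finset.sum_Ico_eq_sum_range,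
        show (i:ℕ) + 1 - (k:ℕ) = d + 1 from by omega]
      rw [← key_sum q d (fun j h1 h2 => hq j h1 (h2.trans hdn)) z]
      apply Finset.sum_congr rfl
      intro l hl
      simp only [Finset.mem_range] at hl
      have hc1 : (k:ℕ) + l ≤ (i:ℕ) := by omega
      have hc2 : (k:ℕ) ≤ (k:ℕ) + l := by omega
      simp only [hG, if_pos hc1, if_pos hc2,
        show (i:ℕ) - ((k:ℕ) + l) = d - l from by omega,
        show (k:ℕ) + l - (k:ℕ) = l from by omega]
      rw [one_div, one_div, qPoch_inv' q hq0 l, div_eq_mul_inv, mul_inv]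
      linear_combination ((-1:ℂ))^l * (qPoch q q l)⁻¹ * (qPoch q q (d-l))⁻¹ *
        zpow_scalar q hq0 m k l
    rw [hLHS]
    rcases Nat.lt_or_ge d m with hdm | hdm
    · rcases Nat.eq_zero_or_pos d with hd0 | hd1
      · have hik' : i = k := Fin.ext (by omega)
        rw [if_pos hik', hd0]
        rw [Finset.sum_eq_zero, add_zero]
        · simp [qPoch]
        · intro j hj
          simp only [Finset.mem_Icc] at hj
          rw [if_neg (by omega), mul_zero]
      · have hik' : ¬ i = k := fun h => by simp [h] at hd1; omega
        rw [if_neg hik', zero_add]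
        rw [Finset.sum_eq_single_of_mem d (Finset.mem_Icc.mpr ⟨hd1, by omega⟩)]
        · rw [if_pos (by omega), mul_one]
        · intro j hj hjd
          rw [if_neg (by omega), mul_zero]
    · -- d ≥ m : both sides zero
      have hnum : qPoch z q d = 0 := by
        apply Finset.prod_eq_zero (Finset.mem_range.mpr (show m - 1 < d by omega))
        have hc : ((m - 1 : ℕ) : ℤ) = (m : ℤ) - 1 := by omega
        rw [hz, ← zpow_natCast q (m-1), ← zpow_add₀ hq0, hc,
          show (1:ℤ) - (m:ℤ) + ((m:ℤ) - 1) = 0 from by ring, zpow_zero]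
        ring
      rw [hnum, zero_div]
      have hik' : ¬ i = k := fun h => by simp [h] at hdm; omega
      rw [if_neg hik', zero_add]
      rw [Finset.sum_eq_zero]
      intro j hj
      simp only [Finset.mem_Icc] at hj
      rw [if_neg (by omega), mul_zero]
  · -- i < k : both sides zero
    rw [Finset.sum_eq_zero, if_neg (fun h : i = k => hik (by rw [h])),
      Finset.sum_eq_zero, add_zero]
    · intro j hj
      simp only [Finset.mem_Icc] at hj
      rw [if_neg (by omega), mul_zero]
    · intro j _
      rcases le_or_gt ((j:ℕ)) ((i:ℕ)) with h1 | h1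
      · rw [if_neg (by omega : ¬ (k:ℕ) ≤ (j:ℕ))]
        ring
      · rw [if_neg (by omega : ¬ (j:ℕ) ≤ (i:ℕ))]
        ring
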